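/- For every z ∈ ℂ with Re z > 0, the function x ↦ 1/(x+1) − 1/(x+z) is Lebesgue integrable on (0,∞) and ∫₀^∞ (1/(x+1) − 1/(x+z)) dx = Log z, where Log denotes the principal branch of the complex logarithm. -/

import Mathlib

open MeasureTheory

/-- for `Re z > 0`, the function `x ↦ 1/(x+1) − 1/(x+z)` is Lebesgue
integrable on `(0,∞)` and `∫₀^∞ (1/(x+1) − 1/(x+z)) dx = Log z`, where `Log` is the
principal branch of the complex logarithm. -/
theorem statement7 (z : ℂ) (hz : 0 < z.re) :
    IntegrableOn (fun x : ℝ => 1 / ((x : ℂ) + 1) - 1 / ((x : ℂ) + z)) (Set.Ioi 0) ∧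
    ∫ x : ℝ in Set.Ioi 0, (1 / ((x : ℂ) + 1) - 1 / ((x : ℂ) + z)) = Complex.log z := by
  set f : ℝ → ℂ := fun x => 1 / ((x : ℂ) + 1) - 1 / ((x : ℂ) + z) with hf
  have h1 : ∀ x : ℝ, 0 ≤ x → ((x : ℂ) + 1) ≠ 0 := by
    intro x hx h
    have := congrArg Complex.re h
    simp at this; linarith
  have h2 : ∀ x : ℝ, 0 ≤ x → ((x : ℂ) + z) ≠ 0 := by
    intro x hx h
    have := congrArg Complex.re h
    simp at this; linarith
  have hcont : ContinuousOn f (Set.Ici 0) := by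
    apply ContinuousOn.sub
    · exact ContinuousOn.div continuousOn_const
        (by fun_prop) (fun x hx => h1 x hx)
    · exact ContinuousOn.div continuousOn_const
        (by fun_prop) (fun x hx => h2 x hx)
  have hint : IntegrableOn f (Set.Ioi 0) := by
    have hIoc : IntegrableOn f (Set.Ioc 0 1) := by
      have : IntegrableOn f (Set.Icc 0 1) volume :=
        (hcont.mono (Set.Icc_subset_Ici_self : Set.Icc (0:ℝ) 1 ⊆ Set.Ici 0)).integrableOn_Icc
      exact this.mono_set Set.Ioc_subset_Icc_self
    have hIoi : IntegrableOn f (Set.Ioi 1) := by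
      have hg : IntegrableOn (fun x : ℝ => ‖z - 1‖ * x ^ (-2 : ℝ)) (Set.Ioi 1) :=
        (integrableOn_Ioi_rpow_of_lt (by norm_num) one_pos).const_mul _
      refine Integrable.mono' hg ?_ ?_
      · exact ((hcont.mono (show Set.Ioi (1:ℝ) ⊆ Set.Ici 0 from fun x (hx : 1 < x) => (le_of_lt (lt_of_lt_of_le one_pos
          (le_of_lt hx)) : (0:ℝ) ≤ x))).aestronglyMeasurable measurableSet_Ioi)
      · filter_upwards [ae_restrict_mem measurableSet_Ioi] with x hx
        have hx1 : (1:ℝ) < x := hx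
        have hx0 : (0:ℝ) < x := lt_trans one_pos hx1
        have e1 : f x = (z - 1) / (((x : ℂ) + 1) * ((x : ℂ) + z)) := by
          rw [hf]
          field_simp [h1 x hx0.le, h2 x hx0.le]
          ring
        rw [e1]
        have hb1 : x ≤ ‖(x : ℂ) + 1‖ := by
          have h := Complex.re_le_norm ((x:ℂ) + 1)
          simp only [Complex.add_re, Complex.ofReal_re, Complex.one_re] at h
          linarith
        have hb2 : x ≤ ‖(x : ℂ) + z‖ := by
          have h := Complex.re_le_norm ((x:ℂ) + z)
          simp only [Complex.add_re, Complex.ofReal_re] at h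
          linarith
        have hnorm : ‖(z - 1) / (((x : ℂ) + 1) * ((x : ℂ) + z))‖
            = ‖z - 1‖ / (‖(x : ℂ) + 1‖ * ‖(x : ℂ) + z‖) := by
          simp [norm_div, norm_mul]
        have hr : ‖z - 1‖ * x ^ (-2 : ℝ) = ‖z - 1‖ / (x * x) := by
          rw [Real.rpow_neg hx0.le, show (2:ℝ) = ((2:ℕ):ℝ) by norm_num,
            Real.rpow_natCast, sq]
          ring
        rw [hnorm, hr]
        gcongr
    have : Set.Ioi (0:ℝ) = Set.Ioc 0 1 ∪ Set.Ioi 1 :=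
      (Set.Ioc_union_Ioi_eq_Ioi (by norm_num)).symm
    rw [this]
    exact hIoc.union hIoi
  refine ⟨hint, ?_⟩
  set F : ℝ → ℂ := fun x => -Complex.log (((x : ℂ) + z) / ((x : ℂ) + 1)) with hF
  have hslit : ∀ x : ℝ, 0 ≤ x → ((x : ℂ) + z) / ((x : ℂ) + 1) ∈ Complex.slitPlane := by
    intro x hx
    rw [Complex.mem_slitPlane_iff]
    left
    have : ((x : ℂ) + 1) = ((x + 1 : ℝ) : ℂ) := by push_cast; ring
    rw [this, Complex.div_ofReal_re]
    apply div_pos _ (by linarith)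
    simp only [Complex.add_re, Complex.ofReal_re]
    linarith
  have hderiv : ∀ x ∈ Set.Ioi (0:ℝ), HasDerivAt F (f x) x := by
    intro x hx
    have hx0 : (0:ℝ) ≤ x := (le_of_lt hx)
    have e1 := h1 x hx0
    have e2 := h2 x hx0
    have hd1 : HasDerivAt (fun w : ℂ => (w + z) / (w + 1))
        ((1 * ((x:ℂ) + 1) - ((x:ℂ) + z) * 1) / ((x:ℂ) + 1) ^ 2) (x : ℂ) :=
      ((hasDerivAt_id _).add_const z).div ((hasDerivAt_id _).add_const 1) e1
    have hd2 : HasDerivAt (fun w : ℂ => -Complex.log ((w + z) / (w + 1)))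
        (-(((1 * ((x:ℂ) + 1) - ((x:ℂ) + z) * 1) / ((x:ℂ) + 1) ^ 2) /
          (((x:ℂ) + z) / ((x:ℂ) + 1)))) (x : ℂ) :=
      (hd1.clog (hslit x hx0)).neg
    have := hd2.comp_ofReal
    convert this using 1
    rw [hf]
    have e1' : ((1:ℂ) + x) ≠ 0 := by rw [add_comm]; exact e1
    field_simp
    ring
  have hcontF : ContinuousWithinAt F (Set.Ici 0) 0 := by
    apply ContinuousAt.continuousWithinAt
    apply ContinuousAt.neg
    apply ContinuousAt.clog
    · exact ContinuousAt.div (by fun_prop) (by fun_prop) (by simp)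
    · simpa using hslit 0 le_rfl
  have htends : Filter.Tendsto F Filter.atTop (nhds 0) := by
    have harg : Filter.Tendsto (fun x : ℝ => ((x : ℂ) + z) / ((x : ℂ) + 1))
        Filter.atTop (nhds 1) := by
      have hinv : Filter.Tendsto (fun x : ℝ => ((x:ℂ))⁻¹) Filter.atTop (nhds 0) := by
        have := (Complex.continuous_ofReal.tendsto 0).comp tendsto_inv_atTop_zero
        simpa [Function.comp_def] using this
      have key : Filter.Tendsto (fun x : ℝ => (1 + z * ((x:ℂ))⁻¹) / (1 + 1 * ((x:ℂ))⁻¹))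
          Filter.atTop (nhds 1) := by
        have hnum : Filter.Tendsto (fun x : ℝ => 1 + z * ((x:ℂ))⁻¹)
            Filter.atTop (nhds 1) := by
          have := (tendsto_const_nhds (x := (1:ℂ))).add
            ((tendsto_const_nhds (x := z)).mul hinv)
          simpa using this
        have hden : Filter.Tendsto (fun x : ℝ => 1 + 1 * ((x:ℂ))⁻¹)
            Filter.atTop (nhds 1) := by
          have := (tendsto_const_nhds (x := (1:ℂ))).add
            ((tendsto_const_nhds (x := (1:ℂ))).mul hinv)
          simpa using this
        have hq := hnum.div hden one_ne_zero
        rw [div_one] at hq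
        exact hq
      refine key.congr' ?_
      filter_upwards [Filter.eventually_gt_atTop (0:ℝ)] with x hx
      have hx' : (x : ℂ) ≠ 0 := by exact_mod_cast ne_of_gt hx
      have hden : (1:ℂ) + 1 * ((x:ℂ))⁻¹ ≠ 0 := by
        have e : (1:ℂ) + 1 * ((x:ℂ))⁻¹ = ((x:ℂ) + 1) / x := by
          field_simp
        rw [e]
        exact div_ne_zero (h1 x hx.le) hx'
      rw [div_eq_div_iff hden (h1 x hx.le)]
      field_simp
    have := (harg.clog (by simp [Complex.mem_slitPlane_iff])).neg
    simpa [hF, Complex.log_one] using this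
  have := integral_Ioi_of_hasDerivAt_of_tendsto hcontF hderiv hint htends
  rw [this, hF]
  simp [Complex.log_one]
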